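/- For γ = [[a,b],[c,d]] in SL₂(ℝ) with determinant 1 and ‖γ‖ = max(|a|,|b|,|c|,|d|), one has d(γ·i, i) = 2 log(√((b-c)² + (a+d)²) + √((b+c)² + (a-d)²)) - 2 log 2. -/

import Mathlib

open UpperHalfPlane

/-- For γ ∈ SL₂(ℝ),
d(γ·i, i) = 2 log(√((b-c)²+(a+d)²) + √((b+c)²+(a-d)²)) - 2 log 2. -/
theorem dist_smul_I_eq (γ : Matrix.SpecialLinearGroup (Fin 2) ℝ) :
    dist (γ • UpperHalfPlane.I) UpperHalfPlane.I =
      2 * Real.log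
          (Real.sqrt ((γ 0 1 - γ 1 0) ^ 2 + (γ 0 0 + γ 1 1) ^ 2) +
            Real.sqrt ((γ 0 1 + γ 1 0) ^ 2 + (γ 0 0 - γ 1 1) ^ 2)) -
        2 * Real.log 2 := by
  set a := γ 0 0 with ha
  set b := γ 0 1 with hb
  set c := γ 1 0 with hc
  set d := γ 1 1 with hd
  have hdet : a * d - b * c = 1 := by
    have := γ.property
    rw [Matrix.det_fin_two] at this
    linarith [this]
  have hD : (0:ℝ) < c ^ 2 + d ^ 2 := by
    rcases eq_or_lt_of_le (by positivity : (0:ℝ) ≤ c ^ 2 + d ^ 2) with h | h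
    · exfalso
      have hc0 : c = 0 := by nlinarith [sq_nonneg c, sq_nonneg d]
      have hd0 : d = 0 := by nlinarith [sq_nonneg c, sq_nonneg d]
      rw [hc0, hd0] at hdet
      simp at hdet
    · exact h
  set z : ℍ := γ • UpperHalfPlane.I with hzdef
  have hden : ((c:ℂ) * Complex.I + d) ≠ 0 := by
    intro h
    have hre : ((c:ℂ) * Complex.I + d).re = d := by simp
    have him : ((c:ℂ) * Complex.I + d).im = c := by simp
    rw [h] at hre him
    simp at hre him
    nlinarith
  have hz : (z : ℂ) = ((a:ℂ) * Complex.I + b) / ((c:ℂ) * Complex.I + d) := by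
    rw [hzdef, UpperHalfPlane.specialLinearGroup_apply]
    simp [UpperHalfPlane.coe_I]
    rfl
  have hzim : z.im = 1 / (c ^ 2 + d ^ 2) := by
    have : z.im = ((z : ℂ)).im := rfl
    rw [this, hz, Complex.div_im]
    simp [Complex.normSq_apply]
    have hne : d * d + c * c ≠ 0 := by nlinarith
    field_simp
    rw [div_eq_iff (by nlinarith)]
    linear_combination (c ^ 2 + d ^ 2) * hdet
  set P := (b + c) ^ 2 + (a - d) ^ 2 with hP
  set M := (b - c) ^ 2 + (a + d) ^ 2 with hM
  have hPnn : (0:ℝ) ≤ P := by positivity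
  have hMP : M = P + 4 := by rw [hM, hP]; nlinarith
  have hdistC : dist (z : ℂ) (UpperHalfPlane.I : ℂ) =
      Real.sqrt P / Real.sqrt (c ^ 2 + d ^ 2) := by
    rw [Complex.dist_eq, UpperHalfPlane.coe_I, hz]
    have hsub : ((a:ℂ) * Complex.I + b) / ((c:ℂ) * Complex.I + d) - Complex.I =
        (((b + c : ℝ) : ℂ) + ((a - d : ℝ) : ℂ) * Complex.I) / ((c:ℂ) * Complex.I + d) := by
      rw [sub_eq_iff_eq_add, div_add' _ _ _ hden, div_left_inj' hden]
      push_cast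
      linear_combination (-(c:ℂ)) * Complex.I_sq
    rw [hsub, norm_div]
    have h1 : ‖(((b + c : ℝ) : ℂ) + ((a - d : ℝ) : ℂ) * Complex.I)‖
        = Real.sqrt P := by
      rw [Complex.norm_def, Complex.normSq_add_mul_I, hP]
    have h2 : ‖((c:ℂ) * Complex.I + d)‖ = Real.sqrt (c ^ 2 + d ^ 2) := by
      rw [Complex.norm_def]
      congr 1
      simp [Complex.normSq_apply]
      ring
    rw [h1, h2]
  have harg : dist (z : ℂ) (UpperHalfPlane.I : ℂ) /
      (2 * Real.sqrt (z.im * UpperHalfPlane.I.im)) = Real.sqrt P / 2 := by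
    rw [hdistC, hzim, UpperHalfPlane.I_im, mul_one, one_div, Real.sqrt_inv]
    have hsD : Real.sqrt (c ^ 2 + d ^ 2) ≠ 0 := by positivity
    field_simp
  rw [UpperHalfPlane.dist_eq, harg, Real.arsinh]
  have h14 : (1 : ℝ) + (Real.sqrt P / 2) ^ 2 = M / 4 := by
    rw [div_pow, Real.sq_sqrt hPnn, hMP]; ring
  rw [h14]
  have hMnn : (0:ℝ) ≤ M := by positivity
  have hM4 : Real.sqrt (M / 4) = Real.sqrt M / 2 := by
    rw [Real.sqrt_div hMnn, show (4:ℝ) = 2 ^ 2 by norm_num, Real.sqrt_sq (by norm_num : (0:ℝ) ≤ 2)]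
  rw [hM4]
  have hsum : Real.sqrt P / 2 + Real.sqrt M / 2 = (Real.sqrt M + Real.sqrt P) / 2 := by ring
  rw [hsum]
  have hpos : 0 < Real.sqrt M + Real.sqrt P := by
    have : (0:ℝ) < Real.sqrt M := Real.sqrt_pos.mpr (by nlinarith)
    nlinarith [Real.sqrt_nonneg P]
  rw [Real.log_div (ne_of_gt hpos) (by norm_num)]
  ring
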